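/- Let Λ be a numerical semigroup of genus g generated by positive integers λ1 < … < λm and let q ≥ 2 be an integer. Then q·(#(Λ \ ∪_{i=1}^{m} (q·λi + Λ)) + 1) ≤ (q² − 1)·g + q² + 2q − 1; equivalently, #(Λ \ ∪_{i=1}^{m}(q·λi + Λ)) + 1 ≤ (q − 1/q)·g + q + 2 − 1/q. (This is the combinatorial content of the paper's improvement of Serre's upper bound: N_q(g) ≤ (q − 1/q)g + q + 2 − 1/q.) -/

import Mathlib

/-- combinatorial content of Proposition 2: For a numerical
semigroup `Λ` of genus `g` generated by positive integers
`λ 0 < … < λ (m-1)` and an integer `q ≥ 2`,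
`q·(#(Λ \ ⋃ i, (q·λ i + Λ)) + 1) ≤ (q² − 1)·g + q² + 2q − 1`,
i.e. `#(Λ \ ⋃ i, (q·λ i + Λ)) + 1 ≤ (q − 1/q)·g + q + 2 − 1/q`. -/
theorem serre_improvement
    (Λ : Set ℕ) (hfin : (Λᶜ : Set ℕ).Finite)
    (g : ℕ) (hg : g = (Λᶜ : Set ℕ).ncard)
    (q : ℕ) (hq : 2 ≤ q)
    (m : ℕ)
    (lam : Fin m → ℕ)
    (hlam_pos : ∀ i, 0 < lam i)
    (hlam_mono : StrictMono lam)
    (hgen : Λ = {n : ℕ | ∃ a : Fin m → ℕ, n = ∑ i, a i * lam i}) :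
    (q : ℤ) * (((Λ \ ⋃ i : Fin m, (fun x => q * lam i + x) '' Λ).ncard + 1 : ℕ) : ℤ) ≤
      ((q : ℤ) ^ 2 - 1) * (g : ℤ) + (q : ℤ) ^ 2 + 2 * (q : ℤ) - 1 := by
  classical
  -- basic semigroup facts
  have hzero : 0 ∈ Λ := by
    rw [hgen]; exact ⟨fun _ => 0, by simp⟩
  have hm : 0 < m := by
    rcases Nat.eq_zero_or_pos m with h0 | h
    · exfalso
      subst h0
      have hsub : Set.Ioi 0 ⊆ Λᶜ := by
        intro n hn
        simp only [Set.mem_compl_iff, hgen, Set.mem_setOf_eq]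
        rintro ⟨a, rfl⟩
        simp at hn
      exact (Set.Ioi_infinite 0) (hfin.subset hsub)
    · exact h
  set i0 : Fin m := ⟨0, hm⟩ with hi0
  set ℓ : ℕ := lam i0 with hldef
  clear_value i0 ℓ
  have hℓpos : 0 < ℓ := by rw [hldef]; exact hlam_pos i0
  have hmemgen : ∀ i, lam i ∈ Λ := by
    intro i; rw [hgen]
    refine ⟨fun j => if j = i then 1 else 0, ?_⟩
    simp [ite_mul]
  have hadd : ∀ x ∈ Λ, ∀ y ∈ Λ, x + y ∈ Λ := by
    intro x hx y hy
    rw [hgen] at hx hy ⊢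
    obtain ⟨a, rfl⟩ := hx; obtain ⟨b, rfl⟩ := hy
    exact ⟨fun j => a j + b j, by simp [add_mul, Finset.sum_add_distrib]⟩
  have hsmul : ∀ (n : ℕ), ∀ x ∈ Λ, n * x ∈ Λ := by
    intro n x hx
    rw [hgen] at hx ⊢
    obtain ⟨a, rfl⟩ := hx
    exact ⟨fun j => n * a j, by rw [Finset.mul_sum]; simp [mul_assoc]⟩
  have hdecomp : ∀ x ∈ Λ, x ≠ 0 → ∃ i, ∃ ν, ν ∈ Λ ∧ x = lam i + ν := by
    intro x hx hx0
    rw [hgen] at hx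
    obtain ⟨a, rfl⟩ := hx
    have hex : ∃ i, a i ≠ 0 := by
      by_contra h
      push_neg at h
      simp [h] at hx0
    obtain ⟨i, hi⟩ := hex
    refine ⟨i, ∑ j, (Function.update a i (a i - 1)) j * lam j, ?_, ?_⟩
    · rw [hgen]; exact ⟨_, rfl⟩
    · have key : ∀ j : Fin m, a j * lam j =
          (if j = i then lam i else 0) + (Function.update a i (a i - 1)) j * lam j := by
        intro j
        rcases eq_or_ne j i with rfl | hne
        · simp only [Function.update_self, if_pos rfl]
          obtain ⟨k, hk⟩ := Nat.exists_eq_succ_of_ne_zero hi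
          rw [hk]
          simp [Nat.succ_sub_one, Nat.succ_mul]
          ring
        · simp [Function.update_of_ne hne, hne]
      rw [Finset.sum_congr rfl (fun j _ => key j), Finset.sum_add_distrib]
      simp
  have hmin : ∀ x ∈ Λ, x ≠ 0 → ℓ ≤ x := by
    intro x hx hx0
    obtain ⟨i, ν, hν, rfl⟩ := hdecomp x hx hx0
    have h1 : ℓ ≤ lam i := by
      rw [hldef]
      apply hlam_mono.monotone
      simp [hi0, Fin.le_def]
    omega
  -- bound on gaps
  obtain ⟨B0, hB0⟩ := hfin.bddAbove
  set B : ℕ := B0 + ℓ + 1 with hBdef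
  clear_value B
  have hB : ∀ n, B ≤ n → n ∈ Λ := by
    intro n hn
    by_contra h
    have : n ≤ B0 := hB0 h
    omega
  have hℓB : ℓ + 1 ≤ B := by omega
  set N : ℕ := q * ℓ + B with hNdef
  clear_value N
  set gapsF : Finset ℕ := hfin.toFinset with hgapsF
  have hmemgaps : ∀ x, x ∈ gapsF ↔ x ∉ Λ := by
    intro x; rw [hgapsF]; exact Set.Finite.mem_toFinset hfin
  have hgcard : g = gapsF.card := by rw [hg, hgapsF]; exact Set.ncard_eq_toFinset_card _ hfin
  clear_value gapsF
  have hgapslt : ∀ x ∈ gapsF, x < B := by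
    intro x hx
    by_contra h
    exact (hmemgaps x).1 hx (hB x (by omega))
  have hcount : ∀ M, B ≤ M → ((Finset.range M).filter (· ∈ Λ)).card = M - g := by
    intro M hM
    have hsub : gapsF ⊆ Finset.range M := by
      intro x hx; exact Finset.mem_range.mpr (lt_of_lt_of_le (hgapslt x hx) hM)
    have heq : (Finset.range M).filter (· ∈ Λ) = Finset.range M \ gapsF := by
      ext x
      simp only [Finset.mem_filter, Finset.mem_sdiff, Finset.mem_range, hmemgaps]
      tauto
    rw [heq, Finset.card_sdiff_of_subset hsub, Finset.card_range, hgcard]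
  have hgB : g ≤ B := by
    rw [hgcard]
    calc gapsF.card ≤ (Finset.range B).card := Finset.card_le_card (fun x hx =>
        Finset.mem_range.mpr (hgapslt x hx))
    _ = B := Finset.card_range B
  have hqℓ : q * ℓ ∈ Λ := hsmul q ℓ (by rw [hldef]; exact hmemgen i0)
  set F : Finset ℕ := (Finset.range N).filter (· ∈ Λ) with hF
  clear_value F
  have hFcard : F.card = N - g := by rw [hF]; exact hcount N (by omega)
  set G : Finset ℕ := (Finset.range N).filter (· ∈ (fun x => q * ℓ + x) '' Λ) with hG
  clear_value G
  have hGcard : G.card = B - g := by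
    have himg : G = Finset.image (fun x => q * ℓ + x) ((Finset.range B).filter (· ∈ Λ)) := by
      ext y
      simp only [hG, Finset.mem_filter, Finset.mem_range, Finset.mem_image, Set.mem_image]
      constructor
      · rintro ⟨hy, x, hx, rfl⟩
        exact ⟨x, ⟨by omega, hx⟩, rfl⟩
      · rintro ⟨x, ⟨hxB, hx⟩, rfl⟩
        exact ⟨by omega, x, hx, rfl⟩
    rw [himg, Finset.card_image_of_injective _ (add_right_injective _), hcount B le_rfl]
  have hGF : G ⊆ F := by
    intro y hy
    rw [hG, Finset.mem_filter] at hy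
    obtain ⟨hy1, x, hx, rfl⟩ := hy
    rw [hF, Finset.mem_filter]
    exact ⟨hy1, hadd _ hqℓ _ hx⟩
  have hFGcard : (F \ G).card = q * ℓ := by
    rw [Finset.card_sdiff_of_subset hGF, hFcard, hGcard]
    omega
  -- the union
  set U : Set ℕ := ⋃ i : Fin m, (fun x => q * lam i + x) '' Λ with hU
  clear_value U
  have hSsub : Λ \ U ⊆ ↑(F \ G) := by
    intro x hx
    obtain ⟨hxΛ, hxU⟩ := hx
    rw [hU] at hxU
    have hxqℓ : x ∉ (fun y => q * ℓ + y) '' Λ := by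
      intro hximg
      apply hxU
      apply Set.mem_iUnion.mpr
      exact ⟨i0, by rw [← hldef]; exact hximg⟩
    have hxN : x < N := by
      by_contra h
      push_neg at h
      refine hxqℓ ⟨x - q * ℓ, hB _ (by omega), ?_⟩
      show q * ℓ + (x - q * ℓ) = x
      omega
    rw [Finset.coe_sdiff, Set.mem_diff]
    constructor
    · rw [Finset.mem_coe, hF, Finset.mem_filter]
      exact ⟨Finset.mem_range.mpr hxN, hxΛ⟩
    · rw [Finset.mem_coe, hG, Finset.mem_filter]
      rintro ⟨-, h2⟩
      exact hxqℓ h2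
  -- the extra removed elements
  set K : ℕ := (ℓ - 1) / q with hK
  clear_value K
  have hKle : ∀ j, j ≤ K → q * j ≤ ℓ - 1 := by
    intro j hj
    calc q * j ≤ q * K := Nat.mul_le_mul_left _ hj
    _ ≤ ℓ - 1 := by rw [hK, mul_comm]; exact Nat.div_mul_le_self _ _
  have hqK : ℓ ≤ q * K + q := by
    have hb : ℓ - 1 < (K + 1) * q := by
      have h1 : (ℓ - 1) / q < K + 1 := by rw [hK]; exact Nat.lt_succ_self _
      exact (Nat.div_lt_iff_lt_mul (by omega : 0 < q)).mp h1
    have hcomm : (K + 1) * q = q * K + q := by ring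
    omega
  set J1 : Finset ℕ := (Finset.Icc 1 K).filter (fun j => ℓ + j ∈ Λ) with hJ1
  set J2 : Finset ℕ := (Finset.Icc 1 K).filter (fun j => ¬ ℓ + j ∈ Λ) with hJ2
  clear_value J1 J2
  have hJcards : J1.card + J2.card = K := by
    rw [hJ1, hJ2, Finset.card_filter_add_card_filter_not, Nat.card_Icc]
    omega
  set DF : Finset ℕ := J1.image (fun j => q * (ℓ + j)) with hDF
  clear_value DF
  have hDFcard : DF.card = J1.card := by
    rw [hDF]
    apply Finset.card_image_of_injective
    intro a b hab
    have := Nat.eq_of_mul_eq_mul_left (show 0 < q by omega) hab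
    omega
  have hDFmem : ∀ x ∈ DF, ∃ j, 1 ≤ j ∧ j ≤ K ∧ ℓ + j ∈ Λ ∧ x = q * (ℓ + j) := by
    intro x hx
    rw [hDF, Finset.mem_image] at hx
    obtain ⟨j, hj, rfl⟩ := hx
    rw [hJ1, Finset.mem_filter, Finset.mem_Icc] at hj
    exact ⟨j, hj.1.1, hj.1.2, hj.2, rfl⟩
  have hDFsub : DF ⊆ F \ G := by
    intro x hx
    obtain ⟨j, hj1, hjK, hjΛ, rfl⟩ := hDFmem x hx
    have hqj : q * j ≤ ℓ - 1 := hKle j hjK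
    have hqjpos : 0 < q * j := Nat.mul_pos (by omega) (by omega)
    have hqjn : q * j ∉ Λ := by
      intro hc
      have := hmin _ hc (by omega)
      omega
    have hexp : q * (ℓ + j) = q * ℓ + q * j := by ring
    rw [Finset.mem_sdiff]
    constructor
    · rw [hF, Finset.mem_filter, Finset.mem_range]
      exact ⟨by omega, hsmul q _ hjΛ⟩
    · rw [hG, Finset.mem_filter]
      rintro ⟨-, ν, hν, hνeq⟩
      change q * ℓ + ν = q * (ℓ + j) at hνeq
      rw [hexp] at hνeq
      have hνj : ν = q * j := by omega
      exact hqjn (hνj ▸ hν)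
  have hDFU : ∀ x ∈ DF, x ∈ U := by
    intro x hx
    obtain ⟨j, hj1, hjK, hjΛ, rfl⟩ := hDFmem x hx
    obtain ⟨i, ν, hν, hxeq⟩ := hdecomp (ℓ + j) hjΛ (by omega)
    rw [hU]
    apply Set.mem_iUnion.mpr
    refine ⟨i, q * ν, hsmul q ν hν, ?_⟩
    show q * lam i + q * ν = q * (ℓ + j)
    rw [hxeq]; ring
  have hSsub2 : Λ \ U ⊆ ↑((F \ G) \ DF) := by
    intro x hx
    have h1 := hSsub hx
    rw [Finset.coe_sdiff, Set.mem_diff]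
    exact ⟨h1, fun hxDF => hx.2 (hDFU x hxDF)⟩
  have hscard : (Λ \ U).ncard ≤ q * ℓ - DF.card := by
    calc (Λ \ U).ncard ≤ (((F \ G) \ DF : Finset ℕ) : Set ℕ).ncard :=
        Set.ncard_le_ncard hSsub2 (Finset.finite_toSet _)
    _ = ((F \ G) \ DF).card := Set.ncard_coe_finset _
    _ = (F \ G).card - DF.card := Finset.card_sdiff_of_subset hDFsub
    _ = q * ℓ - DF.card := by rw [hFGcard]
  have hdle : DF.card ≤ q * ℓ := by
    calc DF.card ≤ (F \ G).card := Finset.card_le_card hDFsub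
    _ = q * ℓ := hFGcard
  -- gaps above ℓ
  set e : ℕ := (gapsF.filter (fun x => ¬ x < ℓ)).card with he
  clear_value e
  have hJ2e : J2.card ≤ e := by
    rw [he]
    apply Finset.card_le_card_of_injOn (fun j => ℓ + j)
    · intro j hj
      rw [hJ2, Finset.mem_coe, Finset.mem_filter] at hj
      rw [Finset.mem_coe, Finset.mem_filter, hmemgaps]
      exact ⟨hj.2, by show ¬ ℓ + j < ℓ; omega⟩
    · intro a _ b _ hab
      have hab' : ℓ + a = ℓ + b := hab
      omega
  have hglow : (gapsF.filter (fun x => x < ℓ)).card = ℓ - 1 := by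
    have heq : gapsF.filter (fun x => x < ℓ) = Finset.Ico 1 ℓ := by
      ext x
      simp only [Finset.mem_filter, Finset.mem_Ico, hmemgaps]
      constructor
      · rintro ⟨hxΛ, hxℓ⟩
        rcases Nat.eq_zero_or_pos x with rfl | hpos
        · exact absurd hzero hxΛ
        · exact ⟨hpos, hxℓ⟩
      · rintro ⟨hx1, hxℓ⟩
        refine ⟨fun hxΛ => ?_, hxℓ⟩
        have := hmin x hxΛ (by omega)
        omega
    rw [heq, Nat.card_Ico]
  have hgsplit : g = (ℓ - 1) + e := by
    rw [hgcard, ← Finset.card_filter_add_card_filter_not (p := fun x => x < ℓ), hglow, he]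
  -- final arithmetic
  have h1 : (Λ \ U).ncard + DF.card ≤ q * ℓ := (Nat.le_sub_iff_add_le hdle).mp hscard
  have h2 : K ≤ DF.card + e := by omega
  have h4 : g + 1 = ℓ + e := by omega
  have H1 : ((Λ \ U).ncard : ℤ) + (DF.card : ℤ) ≤ (q : ℤ) * (ℓ : ℤ) := by exact_mod_cast h1
  have H2 : (K : ℤ) ≤ (DF.card : ℤ) + (e : ℤ) := by exact_mod_cast h2
  have H3 : (ℓ : ℤ) ≤ (q : ℤ) * (K : ℤ) + (q : ℤ) := by exact_mod_cast hqK
  have H4 : (g : ℤ) + 1 = (ℓ : ℤ) + (e : ℤ) := by exact_mod_cast h4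
  have Hq : (2 : ℤ) ≤ (q : ℤ) := by exact_mod_cast hq
  have He : (0 : ℤ) ≤ (e : ℤ) := Int.natCast_nonneg e
  have P1 := mul_le_mul_of_nonneg_left H1 (by linarith : (0:ℤ) ≤ (q:ℤ))
  have P2 := mul_le_mul_of_nonneg_left H2 (by linarith : (0:ℤ) ≤ (q:ℤ))
  have P5 : (0:ℤ) ≤ ((q:ℤ)^2 - (q:ℤ) - 1) * (e:ℤ) := by
    apply mul_nonneg _ He
    have h2q : 2 * (q:ℤ) ≤ (q:ℤ) * (q:ℤ) := mul_le_mul_of_nonneg_right Hq (by linarith)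
    have hsq : (q:ℤ)^2 = (q:ℤ) * (q:ℤ) := sq (q:ℤ)
    linarith
  have H4' : ((q:ℤ)^2 - 1) * ((g:ℤ) + 1) = ((q:ℤ)^2 - 1) * ((ℓ:ℤ) + (e:ℤ)) := by rw [H4]
  push_cast
  linarith [P1, P2, P5, H3, H4', Hq]
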